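/- Let H = (f, φ; g, ψ) with entries in L²(𝕋) and suppose R_H is bounded on L²(𝕋). Then R_H is self-adjoint if and only if f and ψ are real-valued (almost everywhere) and g − φ̄ ∈ H². -/

import Mathlib

open MeasureTheory AddCircle Filter Topology
open scoped ENNReal

noncomputable section

namespace GSIO

instance : Fact (0 < 2 * Real.pi) := ⟨by positivity⟩

/-- The unit circle, realized as `ℝ / 2πℤ`. -/
abbrev 𝕋 : Type := AddCircle (2 * Real.pi)

/-- Normalized Lebesgue (Haar) measure on the circle. -/
abbrev μ : Measure 𝕋 := @haarAddCircle (2 * Real.pi) _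

/-- `L²(𝕋)`. -/
abbrev L2 : Type := Lp ℂ 2 μ

/-- The embedding `𝕋 ⊆ ℂ`, `t ↦ e^{it}`. -/
def e : C(𝕋, ℂ) := ⟨fun t => (toCircle t : ℂ), continuous_induced_dom.comp continuous_toCircle⟩

/-- The Hardy space `H²`: the closed linear span of `{zⁿ : n ≥ 0}` in `L²`. -/
def H2 : Submodule ℂ L2 :=
  (Submodule.span ℂ (Set.range fun n : ℕ => (fourierLp 2 (n : ℤ) : L2))).topologicalClosure

instance : CompleteSpace H2 :=
  IsClosed.completeSpace_coe (hs := Submodule.isClosed_topologicalClosure _)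

/-- The Riesz projection `P₊ : L² → H² ⊆ L²`. -/
def Pplus : L2 →L[ℂ] L2 := (H2.subtypeL).comp (H2.orthogonalProjectionOnto)

/-- `P₋ = I - P₊`. -/
def Pminus : L2 →L[ℂ] L2 := ContinuousLinearMap.id ℂ L2 - Pplus

/-- The GSIO defining relation `R x = P₊(f·P₊x) + P₋(g·P₊x) + P₊(φ·P₋x) + P₋(ψ·P₋x)`
at a point `x ∈ L²` (including the requirement that the four products lie in `L²`). -/
def gsioEq (R : L2 → L2) (f g φ ψ : 𝕋 → ℂ) (x : L2) : Prop :=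
  ∃ (h₁ : MemLp (f * ⇑(Pplus x)) 2 μ) (h₂ : MemLp (g * ⇑(Pplus x)) 2 μ)
    (h₃ : MemLp (φ * ⇑(Pminus x)) 2 μ) (h₄ : MemLp (ψ * ⇑(Pminus x)) 2 μ),
    R x = Pplus (h₁.toLp _) + Pminus (h₂.toLp _) + Pplus (h₃.toLp _) + Pminus (h₄.toLp _)

/-- `R` is the (bounded) generalized singular integral operator with
symbol matrix `(f, φ; g, ψ)`. -/
def IsGSIO (R : L2 →L[ℂ] L2) (f g φ ψ : 𝕋 → ℂ) : Prop := ∀ x : L2, gsioEq (⇑R) f g φ ψ x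

/-- Normalized reproducing kernel `k_z` of `H²`, as an element of `L²`. -/
def kern (z : ℂ) : L2 :=
  (Real.sqrt (1 - ‖z‖ ^ 2) : ℂ) • ∑' n : ℕ, (starRingEnd ℂ z) ^ n • (fourierLp 2 (n : ℤ) : L2)

/-- The unit vector `z̄k̄_z : w ↦ w̄ ⬝ conj (k_z w)` of `(H²)^⊥`, as an element of `L²`. -/
def kbar (z : ℂ) : L2 :=
  (Real.sqrt (1 - ‖z‖ ^ 2) : ℂ) • ∑' n : ℕ, z ^ n • (fourierLp 2 (-(n + 1) : ℤ) : L2)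

/-- `L∞(𝕋)`: essentially bounded (a.e. strongly measurable) functions. -/
def Linf : Set (𝕋 → ℂ) := {h | MemLp h ∞ μ}

/-- `C(𝕋)`: functions (a.e. equal to) continuous functions. -/
def CT : Set (𝕋 → ℂ) := {h | ∃ c : 𝕋 → ℂ, Continuous c ∧ h =ᵐ[μ] c}

/-- `H∞ = H² ∩ L∞`. -/
def Hinf : Set (𝕋 → ℂ) := {h | ∃ h2 : MemLp h 2 μ, h2.toLp h ∈ H2 ∧ MemLp h ∞ μ}

/-- `H∞ + C(𝕋)`. -/
def HinfC : Set (𝕋 → ℂ) := {h | ∃ a ∈ Hinf, ∃ c ∈ CT, h =ᵐ[μ] a + c}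

/-- The quasicontinuous functions `QC = (H∞ + C) ∩ conj (H∞ + C)`. -/
def QC : Set (𝕋 → ℂ) := {h | h ∈ HinfC ∧ star h ∈ HinfC}

/-- The set of GSIOs with all four symbols in `S`. -/
def gsioSet (S : Set (𝕋 → ℂ)) : Set (L2 →L[ℂ] L2) :=
  {R | ∃ f g φ ψ : 𝕋 → ℂ, f ∈ S ∧ g ∈ S ∧ φ ∈ S ∧ ψ ∈ S ∧ IsGSIO R f g φ ψ}

/-- The C*-algebra `𝔑_S` generated by the GSIOs with symbols in `S`. -/
def NAlg (S : Set (𝕋 → ℂ)) : StarSubalgebra ℂ (L2 →L[ℂ] L2) :=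
  (StarAlgebra.adjoin ℂ (gsioSet S)).topologicalClosure

/-- Generators `R_{H₁} R_{H₂} - R_K` of the semicommutator ideal. -/
def semiGen (S : Set (𝕋 → ℂ)) : Set (L2 →L[ℂ] L2) :=
  {T | ∃ f₁ g₁ φ₁ ψ₁ f₂ g₂ φ₂ ψ₂ g φ : 𝕋 → ℂ,
      f₁ ∈ S ∧ g₁ ∈ S ∧ φ₁ ∈ S ∧ ψ₁ ∈ S ∧ f₂ ∈ S ∧ g₂ ∈ S ∧ φ₂ ∈ S ∧ ψ₂ ∈ S ∧
      g ∈ S ∧ φ ∈ S ∧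
      ∃ R₁ R₂ RK : L2 →L[ℂ] L2, IsGSIO R₁ f₁ g₁ φ₁ ψ₁ ∧ IsGSIO R₂ f₂ g₂ φ₂ ψ₂ ∧
        IsGSIO RK (f₁ * f₂) g φ (ψ₁ * ψ₂) ∧ T = R₁ * R₂ - RK}

/-- The closed two-sided ideal `𝔖𝔑_S` of `𝔑_S` generated by the semicommutators. -/
def SemiIdeal (S : Set (𝕋 → ℂ)) : Set (L2 →L[ℂ] L2) :=
  closure (AddSubgroup.closure
    {T | ∃ a b t : L2 →L[ℂ] L2, a ∈ NAlg S ∧ b ∈ NAlg S ∧ t ∈ semiGen S ∧ T = a * t * b} :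
      Set (L2 →L[ℂ] L2))

/-- Fredholm: closed range and finite-dimensional kernel and cokernel. -/
def IsFredholm (T : L2 →L[ℂ] L2) : Prop :=
  FiniteDimensional ℂ (LinearMap.ker (T : L2 →ₗ[ℂ] L2)) ∧
  FiniteDimensional ℂ (L2 ⧸ LinearMap.range (T : L2 →ₗ[ℂ] L2)) ∧
  IsClosed (LinearMap.range (T : L2 →ₗ[ℂ] L2) : Set L2)

/-- Fredholm index `ind T = dim ker T - dim ker T*`. -/
def ind (T : L2 →L[ℂ] L2) : ℤ :=
  (Module.finrank ℂ (LinearMap.ker (T : L2 →ₗ[ℂ] L2)) : ℤ) -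
    (Module.finrank ℂ (LinearMap.ker (ContinuousLinearMap.adjoint T : L2 →ₗ[ℂ] L2)) : ℤ)

/-- Essential spectrum (spectrum in the Calkin algebra, via Atkinson's theorem). -/
def essSpectrum (T : L2 →L[ℂ] L2) : Set ℂ := {z | ¬ IsFredholm (T - z • 1)}

/-- Essential norm: distance to the compact operators. -/
def essNorm (T : L2 →L[ℂ] L2) : ℝ :=
  sInf ((fun K => ‖T + K‖) '' {K : L2 →L[ℂ] L2 | IsCompactOperator K})

/-- Essential range of a measurable function. -/
def essRange (f : 𝕋 → ℂ) : Set ℂ := {c | ∀ ε > 0, μ {t | dist (f t) c < ε} ≠ 0}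

/-- `a` has winding number `w` about the origin, via a continuous argument lift. -/
def HasWindingNumber (a : C(𝕋, ℂ)) (w : ℤ) : Prop :=
  ∃ θ : ℝ → ℝ, ContinuousOn θ (Set.Icc 0 (2 * Real.pi)) ∧
    (∀ t ∈ Set.Icc 0 (2 * Real.pi),
      a (t : 𝕋) = (‖a (t : 𝕋)‖ : ℂ) * Complex.exp (θ t * Complex.I)) ∧
    θ (2 * Real.pi) - θ 0 = 2 * Real.pi * w

/-- The constant function `1` in `L²`. -/
def one2 : L2 := MemLp.toLp (fun _ => (1 : ℂ)) (memLp_const 1)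

/-- The rank-one operator `1 ⊗ 1 : x ↦ ⟨x,1⟩·1`. -/
def oneProj : L2 →L[ℂ] L2 := (innerSL ℂ one2).smulRight one2

/-- The Hilbert transform `ℍ = P₊ - P₋ - 1⊗1`. -/
def hilbertT : L2 →L[ℂ] L2 := Pplus - Pminus - oneProj

/-- `BMO(𝕋) = L∞ + ℍ L∞`, as a subset of `L²`. -/
def BMO2 : Set L2 := {x | ∃ a b : L2, ⇑a ∈ Linf ∧ ⇑b ∈ Linf ∧ x = a + hilbertT b}

/-- `⋂_{p ≥ 1} L^p(𝕋)`. -/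
def Lfin : Set (𝕋 → ℂ) := {h | ∀ p : ℝ, 1 ≤ p → MemLp h (ENNReal.ofReal p) μ}

/-- The GSIO relation for a map defined on functions (rather than on `L²`). -/
def gsioEqF (R : (𝕋 → ℂ) → (𝕋 → ℂ)) (f g φ ψ : 𝕋 → ℂ) (x : 𝕋 → ℂ) : Prop :=
  ∃ (hx : MemLp x 2 μ)
    (h₁ : MemLp (f * ⇑(Pplus (hx.toLp x))) 2 μ) (h₂ : MemLp (g * ⇑(Pplus (hx.toLp x))) 2 μ)
    (h₃ : MemLp (φ * ⇑(Pminus (hx.toLp x))) 2 μ) (h₄ : MemLp (ψ * ⇑(Pminus (hx.toLp x))) 2 μ),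
    R x =ᵐ[μ] ⇑(Pplus (h₁.toLp _) + Pminus (h₂.toLp _) + Pplus (h₃.toLp _) + Pminus (h₄.toLp _))

/-- Distance in `L∞` from a function to `H∞`. -/
def distHinfF (a : 𝕋 → ℂ) : ℝ :=
  sInf {r : ℝ | ∃ h ∈ Hinf, r = (eLpNorm (a - h) ∞ μ).toReal}

end GSIO

namespace GSIO

/-- The radial-limit function of `T` along the reproducing kernels `k_{rξ}` is `f`:
`lim_{r→1⁻} ⟨T k_{rξ}, k_{rξ}⟩ = f ξ` for a.e. `ξ` (inner products in the Mathlib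
convention, conjugate-linear in the first variable). -/
def symbPlus (T : L2 → L2) (f : 𝕋 → ℂ) : Prop :=
  ∀ᵐ ξ ∂μ, Tendsto
    (fun r : ℝ => (inner ℂ (kern ((r : ℂ) * e ξ)) (T (kern ((r : ℂ) * e ξ))) : ℂ))
    (𝓝[<] (1 : ℝ)) (𝓝 (f ξ))

/-- The radial-limit function of `T` along the vectors `z̄k̄_{rξ}` is `ψ`:
`lim_{r→1⁻} ⟨T z̄k̄_{rξ}, z̄k̄_{rξ}⟩ = ψ ξ` for a.e. `ξ`. -/
def symbMinus (T : L2 → L2) (ψ : 𝕋 → ℂ) : Prop :=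
  ∀ᵐ ξ ∂μ, Tendsto
    (fun r : ℝ => (inner ℂ (kbar ((r : ℂ) * e ξ)) (T (kbar ((r : ℂ) * e ξ))) : ℂ))
    (𝓝[<] (1 : ℝ)) (𝓝 (ψ ξ))

/-- `ρ(T) = (f, ψ)`: the pair of radial-limit symbol functions of `T`, in `L∞ ⊕ L∞`. -/
def HasSymbol (T : L2 →L[ℂ] L2) (f ψ : 𝕋 → ℂ) : Prop :=
  f ∈ Linf ∧ ψ ∈ Linf ∧ symbPlus (⇑T) f ∧ symbMinus (⇑T) ψ

end GSIO

namespace GSIO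

local notation "⟪" x ", " y "⟫" => @inner ℂ _ _ x y

/-- Fourier basis vectors as elements of `L2`. -/
def EF (k : ℤ) : L2 := (fourierLp 2 k : L2)

lemma inner_EF (m n : ℤ) : ⟪EF m, EF n⟫ = if m = n then 1 else 0 :=
  orthonormal_iff_ite.mp orthonormal_fourier m n

lemma fourierCoeff_congr_ae {w v : 𝕋 → ℂ} (h : w =ᵐ[μ] v) (n : ℤ) :
    fourierCoeff w n = fourierCoeff v n :=
  integral_congr_ae (h.mono fun t ht => by simp [ht])

lemma EF_mem {k : ℤ} (hk : 0 ≤ k) : EF k ∈ H2 :=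
  Submodule.le_topologicalClosure _
    (Submodule.subset_span ⟨k.toNat, by simp [EF, Int.toNat_of_nonneg hk]⟩)

lemma EF_orth {k : ℤ} (hk : k < 0) : EF k ∈ H2ᗮ := by
  have hle : H2 ≤ (innerSL ℂ (EF k)).ker := by
    refine Submodule.topologicalClosure_minimal _ ?_ (ContinuousLinearMap.isClosed_ker _)
    rw [Submodule.span_le]
    rintro _ ⟨n, rfl⟩
    have h := inner_EF k n
    rw [if_neg (by omega : k ≠ (n : ℤ))] at h
    simpa [EF] using h
  rw [Submodule.mem_orthogonal']
  intro u hu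
  simpa using hle hu

lemma Pplus_of_mem {x : L2} (h : x ∈ H2) : Pplus x = x :=
  Submodule.starProjection_eq_self_iff.mpr h

lemma Pplus_of_orth {x : L2} (h : x ∈ H2ᗮ) : Pplus x = 0 := by
  show (H2.subtypeL (H2.orthogonalProjectionOnto x) : L2) = 0
  rw [Submodule.orthogonalProjectionOnto_apply_of_mem_orthogonal h]
  rfl

lemma Pplus_mem (x : L2) : Pplus x ∈ H2 := (H2.orthogonalProjectionOnto x).2

lemma Pplus_sym (x y : L2) : ⟪Pplus x, y⟫ = ⟪x, Pplus y⟫ :=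
  (ContinuousLinearMap.isSelfAdjoint_iff_isSymmetric.mp
    (isSelfAdjoint_starProjection H2)) x y

lemma Pminus_sym (x y : L2) : ⟪Pminus x, y⟫ = ⟪x, Pminus y⟫ := by
  simp only [Pminus, ContinuousLinearMap.sub_apply, ContinuousLinearMap.id_apply,
    inner_sub_left, inner_sub_right, Pplus_sym]

lemma Pplus_EF_nonneg {k : ℤ} (hk : 0 ≤ k) : Pplus (EF k) = EF k :=
  Pplus_of_mem (EF_mem hk)

lemma Pplus_EF_neg {k : ℤ} (hk : k < 0) : Pplus (EF k) = 0 :=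
  Pplus_of_orth (EF_orth hk)

lemma Pminus_EF_nonneg {k : ℤ} (hk : 0 ≤ k) : Pminus (EF k) = 0 := by
  simp [Pminus, Pplus_EF_nonneg hk]

lemma Pminus_EF_neg {k : ℤ} (hk : k < 0) : Pminus (EF k) = EF k := by
  simp [Pminus, Pplus_EF_neg hk]

lemma inner_EF_toLp {w : 𝕋 → ℂ} (hw : MemLp w 2 μ) (n : ℤ) :
    ⟪EF n, hw.toLp w⟫ = fourierCoeff w n := by
  have h1 : ⟪EF n, hw.toLp w⟫ = fourierBasis.repr (hw.toLp w) n := by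
    rw [HilbertBasis.repr_apply_apply, coe_fourierBasis]; rfl
  rw [h1, fourierBasis_repr]
  exact fourierCoeff_congr_ae hw.coeFn_toLp n

lemma toLp_inner_EF {w : 𝕋 → ℂ} (hw : MemLp w 2 μ) (n : ℤ) :
    ⟪hw.toLp w, EF n⟫ = starRingEnd ℂ (fourierCoeff w n) := by
  rw [← inner_EF_toLp hw n, inner_conj_symm]

lemma eq_zero_of_inner_EF {x : L2} (h : ∀ n : ℤ, ⟪EF n, x⟫ = 0) : x = 0 := by
  apply fourierBasis.repr.injective
  rw [map_zero]
  ext n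
  rw [HilbertBasis.repr_apply_apply, coe_fourierBasis]
  simpa [EF] using h n

lemma mem_H2_iff {x : L2} : x ∈ H2 ↔ ∀ n : ℤ, n < 0 → ⟪EF n, x⟫ = 0 := by
  constructor
  · intro hx n hn
    rw [← Pplus_of_mem hx, ← Pplus_sym, Pplus_EF_neg hn, inner_zero_left]
  · intro h
    have h0 : Pminus x = 0 := by
      apply eq_zero_of_inner_EF
      intro n
      rw [← Pminus_sym]
      rcases lt_or_ge n 0 with hn | hn
      · rw [Pminus_EF_neg hn]; exact h n hn
      · rw [Pminus_EF_nonneg hn, inner_zero_left]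
    have hx : x = Pplus x := by
      have h1 : x - Pplus x = 0 := by
        simpa [Pminus, ContinuousLinearMap.sub_apply] using h0
      exact sub_eq_zero.mp h1
    rw [hx]; exact Pplus_mem x

lemma fourierCoeff_mul_fourier (w : 𝕋 → ℂ) (m n : ℤ) :
    fourierCoeff (fun t => w t * fourier m t) n = fourierCoeff w (n - m) := by
  unfold fourierCoeff
  refine integral_congr_ae (Eventually.of_forall fun t => ?_)
  have hf : fourier (-(n - m)) t = fourier (-n) t * fourier m t := by
    rw [show -(n - m) = -n + m by ring, fourier_add]
  simp only [smul_eq_mul, hf]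
  ring

lemma fourierCoeff_star (w : 𝕋 → ℂ) (n : ℤ) :
    fourierCoeff (star w) n = starRingEnd ℂ (fourierCoeff w (-n)) := by
  rw [fourierCoeff, fourierCoeff, ← integral_conj]
  refine integral_congr_ae (Eventually.of_forall fun t => ?_)
  simp only [smul_eq_mul, map_mul, neg_neg, Pi.star_apply, Complex.star_def]
  rw [← fourier_neg]

lemma memLp_star {w : 𝕋 → ℂ} (hw : MemLp w 2 μ) : MemLp (star w) 2 μ := by
  have : star w = (fun z : ℂ => starRingEnd ℂ z) ∘ w := by
    funext t; simp [Pi.star_apply, Complex.star_def]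
  rw [this]
  exact (Complex.conjLIE.lipschitz.comp_memLp (by simp) hw)

lemma ae_eq_of_fourierCoeff_eq {w v : 𝕋 → ℂ} (hw : MemLp w 2 μ) (hv : MemLp v 2 μ)
    (h : ∀ n, fourierCoeff w n = fourierCoeff v n) : w =ᵐ[μ] v := by
  have : hw.toLp w = hv.toLp v := by
    apply fourierBasis.repr.injective
    ext n
    rw [fourierBasis_repr, fourierBasis_repr,
      fourierCoeff_congr_ae hw.coeFn_toLp, fourierCoeff_congr_ae hv.coeFn_toLp]
    exact h n
  exact (MemLp.toLp_eq_toLp_iff hw hv).mp this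

/-- Decomposition of `R (EF m)` for `m ≥ 0`. -/
lemma R_EF_decomp_nonneg {f g φ ψ : 𝕋 → ℂ} {R : L2 →L[ℂ] L2} (hR : IsGSIO R f g φ ψ)
    {m : ℤ} (hm : 0 ≤ m) :
    ∃ (h1 : MemLp (fun t => f t * fourier m t) 2 μ)
      (h2 : MemLp (fun t => g t * fourier m t) 2 μ),
      R (EF m) = Pplus (h1.toLp _) + Pminus (h2.toLp _) := by
  obtain ⟨h1, h2, h3, h4, hEq⟩ := hR (EF m)
  have hp : ⇑(Pplus (EF m)) =ᵐ[μ] ⇑(fourier m) := by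
    rw [Pplus_EF_nonneg hm]; exact coeFn_fourierLp 2 m
  have hq : ⇑(Pminus (EF m)) =ᵐ[μ] 0 := by
    rw [Pminus_EF_nonneg hm]; exact Lp.coeFn_zero ℂ 2 μ
  have e1 : (f * ⇑(Pplus (EF m))) =ᵐ[μ] fun t => f t * fourier m t :=
    hp.mono fun t ht => by simp [Pi.mul_apply, ht]
  have e2 : (g * ⇑(Pplus (EF m))) =ᵐ[μ] fun t => g t * fourier m t :=
    hp.mono fun t ht => by simp [Pi.mul_apply, ht]
  have e3 : (φ * ⇑(Pminus (EF m))) =ᵐ[μ] (0 : 𝕋 → ℂ) :=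
    hq.mono fun t ht => by simp [Pi.mul_apply, ht]
  have e4 : (ψ * ⇑(Pminus (EF m))) =ᵐ[μ] (0 : 𝕋 → ℂ) :=
    hq.mono fun t ht => by simp [Pi.mul_apply, ht]
  refine ⟨h1.ae_eq e1, h2.ae_eq e2, ?_⟩
  rw [hEq]
  have t3 : h3.toLp _ = (0 : L2) := by
    rw [← MemLp.toLp_zero (MemLp.zero : MemLp (0 : 𝕋 → ℂ) 2 μ)]
    exact (MemLp.toLp_eq_toLp_iff _ _).mpr e3
  have t4 : h4.toLp _ = (0 : L2) := by
    rw [← MemLp.toLp_zero (MemLp.zero : MemLp (0 : 𝕋 → ℂ) 2 μ)]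
    exact (MemLp.toLp_eq_toLp_iff _ _).mpr e4
  have t1 : h1.toLp _ = (h1.ae_eq e1).toLp _ := (MemLp.toLp_eq_toLp_iff _ _).mpr e1
  have t2 : h2.toLp _ = (h2.ae_eq e2).toLp _ := (MemLp.toLp_eq_toLp_iff _ _).mpr e2
  rw [t1, t2, t3, t4, map_zero, map_zero, add_zero, add_zero]

/-- Decomposition of `R (EF m)` for `m < 0`. -/
lemma R_EF_decomp_neg {f g φ ψ : 𝕋 → ℂ} {R : L2 →L[ℂ] L2} (hR : IsGSIO R f g φ ψ)
    {m : ℤ} (hm : m < 0) :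
    ∃ (h1 : MemLp (fun t => φ t * fourier m t) 2 μ)
      (h2 : MemLp (fun t => ψ t * fourier m t) 2 μ),
      R (EF m) = Pplus (h1.toLp _) + Pminus (h2.toLp _) := by
  obtain ⟨h1, h2, h3, h4, hEq⟩ := hR (EF m)
  have hp : ⇑(Pminus (EF m)) =ᵐ[μ] ⇑(fourier m) := by
    rw [Pminus_EF_neg hm]; exact coeFn_fourierLp 2 m
  have hq : ⇑(Pplus (EF m)) =ᵐ[μ] 0 := by
    rw [Pplus_EF_neg hm]; exact Lp.coeFn_zero ℂ 2 μ
  have e3 : (φ * ⇑(Pminus (EF m))) =ᵐ[μ] fun t => φ t * fourier m t :=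
    hp.mono fun t ht => by simp [Pi.mul_apply, ht]
  have e4 : (ψ * ⇑(Pminus (EF m))) =ᵐ[μ] fun t => ψ t * fourier m t :=
    hp.mono fun t ht => by simp [Pi.mul_apply, ht]
  have e1 : (f * ⇑(Pplus (EF m))) =ᵐ[μ] (0 : 𝕋 → ℂ) :=
    hq.mono fun t ht => by simp [Pi.mul_apply, ht]
  have e2 : (g * ⇑(Pplus (EF m))) =ᵐ[μ] (0 : 𝕋 → ℂ) :=
    hq.mono fun t ht => by simp [Pi.mul_apply, ht]
  refine ⟨h3.ae_eq e3, h4.ae_eq e4, ?_⟩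
  rw [hEq]
  have t1 : h1.toLp _ = (0 : L2) := by
    rw [← MemLp.toLp_zero (MemLp.zero : MemLp (0 : 𝕋 → ℂ) 2 μ)]
    exact (MemLp.toLp_eq_toLp_iff _ _).mpr e1
  have t2 : h2.toLp _ = (0 : L2) := by
    rw [← MemLp.toLp_zero (MemLp.zero : MemLp (0 : 𝕋 → ℂ) 2 μ)]
    exact (MemLp.toLp_eq_toLp_iff _ _).mpr e2
  have t3 : h3.toLp _ = (h3.ae_eq e3).toLp _ := (MemLp.toLp_eq_toLp_iff _ _).mpr e3
  have t4 : h4.toLp _ = (h4.ae_eq e4).toLp _ := (MemLp.toLp_eq_toLp_iff _ _).mpr e4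
  rw [t1, t2, t3, t4, map_zero, map_zero, zero_add, zero_add]

lemma inner_decomp_EF {u v : 𝕋 → ℂ} (hu : MemLp u 2 μ) (hv : MemLp v 2 μ) (n : ℤ) :
    ⟪Pplus (hu.toLp u) + Pminus (hv.toLp v), EF n⟫ =
      starRingEnd ℂ (fourierCoeff (if 0 ≤ n then u else v) n) := by
  rw [inner_add_left, Pplus_sym, Pminus_sym]
  rcases le_or_gt 0 n with hn | hn
  · rw [if_pos hn, Pplus_EF_nonneg hn, Pminus_EF_nonneg hn, inner_zero_right, add_zero,
      toLp_inner_EF]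
  · rw [if_neg (not_le.mpr hn), Pplus_EF_neg hn, Pminus_EF_neg hn, inner_zero_right, zero_add,
      toLp_inner_EF]

lemma entry_pp {f g φ ψ : 𝕋 → ℂ} {R : L2 →L[ℂ] L2} (hR : IsGSIO R f g φ ψ)
    {m n : ℤ} (hm : 0 ≤ m) (hn : 0 ≤ n) :
    ⟪R (EF m), EF n⟫ = starRingEnd ℂ (fourierCoeff f (n - m)) := by
  obtain ⟨h1, h2, hEq⟩ := R_EF_decomp_nonneg hR hm
  rw [hEq, inner_decomp_EF, if_pos hn, fourierCoeff_mul_fourier]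

lemma entry_pm {f g φ ψ : 𝕋 → ℂ} {R : L2 →L[ℂ] L2} (hR : IsGSIO R f g φ ψ)
    {m n : ℤ} (hm : 0 ≤ m) (hn : n < 0) :
    ⟪R (EF m), EF n⟫ = starRingEnd ℂ (fourierCoeff g (n - m)) := by
  obtain ⟨h1, h2, hEq⟩ := R_EF_decomp_nonneg hR hm
  rw [hEq, inner_decomp_EF, if_neg (not_le.mpr hn), fourierCoeff_mul_fourier]

lemma entry_mp {f g φ ψ : 𝕋 → ℂ} {R : L2 →L[ℂ] L2} (hR : IsGSIO R f g φ ψ)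
    {m n : ℤ} (hm : m < 0) (hn : 0 ≤ n) :
    ⟪R (EF m), EF n⟫ = starRingEnd ℂ (fourierCoeff φ (n - m)) := by
  obtain ⟨h1, h2, hEq⟩ := R_EF_decomp_neg hR hm
  rw [hEq, inner_decomp_EF, if_pos hn, fourierCoeff_mul_fourier]

lemma entry_mm {f g φ ψ : 𝕋 → ℂ} {R : L2 →L[ℂ] L2} (hR : IsGSIO R f g φ ψ)
    {m n : ℤ} (hm : m < 0) (hn : n < 0) :
    ⟪R (EF m), EF n⟫ = starRingEnd ℂ (fourierCoeff ψ (n - m)) := by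
  obtain ⟨h1, h2, hEq⟩ := R_EF_decomp_neg hR hm
  rw [hEq, inner_decomp_EF, if_neg (not_le.mpr hn), fourierCoeff_mul_fourier]

/-- If the matrix entries of `R` are symmetric on the Fourier basis, `R` is symmetric. -/
lemma symmetric_of_entries {R : L2 →L[ℂ] L2}
    (h : ∀ m n : ℤ, ⟪R (EF m), EF n⟫ = ⟪EF m, R (EF n)⟫) :
    ∀ x y : L2, ⟪R x, y⟫ = ⟪x, R y⟫ := by
  have bEF : ∀ k : ℤ, (fourierBasis (T := 2 * Real.pi)) k = EF k := by
    intro k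
    have := congrFun (coe_fourierBasis (T := 2 * Real.pi)) k
    simpa [EF] using this
  have step1 : ∀ m : ℤ, ∀ y : L2, ⟪R (EF m), y⟫ = ⟪EF m, R y⟫ := by
    intro m y
    have hsum := fourierBasis.hasSum_repr y
    have hA := hsum.mapL (innerSL ℂ (R (EF m)))
    have hB := hsum.mapL ((innerSL ℂ (EF m)).comp R)
    have hfun : (fun n : ℤ => (innerSL ℂ (R (EF m))) (fourierBasis.repr y n • fourierBasis n)) =
        fun n : ℤ => ((innerSL ℂ (EF m)).comp R) (fourierBasis.repr y n • fourierBasis n) := by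
      funext n
      simp only [ContinuousLinearMap.comp_apply, innerSL_apply_apply, bEF, _root_.map_smul,
        inner_smul_right]
      rw [h m n]
    rw [hfun] at hA
    simpa using hA.unique hB
  intro x y
  have hsum := fourierBasis.hasSum_repr x
  have hA := hsum.mapL ((innerSL ℂ y).comp R)
  have hB := hsum.mapL (innerSL ℂ (R y))
  have hfun : (fun m : ℤ => ((innerSL ℂ y).comp R) (fourierBasis.repr x m • fourierBasis m)) =
      fun m : ℤ => (innerSL ℂ (R y)) (fourierBasis.repr x m • fourierBasis m) := by
    funext m
    simp only [ContinuousLinearMap.comp_apply, innerSL_apply_apply, bEF, _root_.map_smul,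
      inner_smul_right]
    have hy : ⟪y, R (EF m)⟫ = ⟪R y, EF m⟫ :=
      calc ⟪y, R (EF m)⟫ = starRingEnd ℂ ⟪R (EF m), y⟫ := (inner_conj_symm _ _).symm
        _ = starRingEnd ℂ ⟪EF m, R y⟫ := by rw [step1 m y]
        _ = ⟪R y, EF m⟫ := inner_conj_symm _ _
    rw [hy]
  rw [hfun] at hA
  have hyx : ⟪y, R x⟫ = ⟪R y, x⟫ := by simpa using hA.unique hB
  calc ⟪R x, y⟫ = starRingEnd ℂ ⟪y, R x⟫ := (inner_conj_symm _ _).symm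
    _ = starRingEnd ℂ ⟪R y, x⟫ := by rw [hyx]
    _ = ⟪x, R y⟫ := inner_conj_symm _ _

/-- If `R_H` is bounded with symbols in `L²(𝕋)`, then `R_H` is
self-adjoint iff `f` and `ψ` are a.e. real valued and `g - φ̄ ∈ H²`. -/
theorem gsio_selfAdjoint_iff (f g φ ψ : 𝕋 → ℂ)
    (hf : MemLp f 2 μ) (hg : MemLp g 2 μ) (hφ : MemLp φ 2 μ) (hψ : MemLp ψ 2 μ)
    (R : L2 →L[ℂ] L2) (hR : IsGSIO R f g φ ψ) :
    IsSelfAdjoint R ↔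
      ((∀ᵐ t ∂μ, (f t).im = 0) ∧ (∀ᵐ t ∂μ, (ψ t).im = 0) ∧
        ∃ hc : MemLp (g - star φ) 2 μ, hc.toLp (g - star φ) ∈ H2) := by
  have hφs := memLp_star hφ
  constructor
  · intro hsa
    have hsym := ContinuousLinearMap.isSelfAdjoint_iff_isSymmetric.mp hsa
    have key : ∀ m n : ℤ, ⟪R (EF m), EF n⟫ = starRingEnd ℂ ⟪R (EF n), EF m⟫ := by
      intro m n
      have h1 := hsym (EF m) (EF n)
      simp only [ContinuousLinearMap.coe_coe] at h1
      exact h1.trans (inner_conj_symm (EF m) (R (EF n))).symm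
    have hfcoeff : ∀ k : ℤ, fourierCoeff f k = fourierCoeff (star f) k := by
      intro k
      rw [fourierCoeff_star]
      have m0 : (0 : ℤ) ≤ max k 0 := le_max_right _ _
      have n0 : (0 : ℤ) ≤ max k 0 - k := by omega
      have hk := key (max k 0) (max k 0 - k)
      rw [entry_pp hR m0 n0, entry_pp hR n0 m0] at hk
      have h2 : starRingEnd ℂ (fourierCoeff f (-k)) = fourierCoeff f k := by
        simpa [show (max k 0 - k) - max k 0 = -k by ring,
          show max k 0 - (max k 0 - k) = k by ring] using hk
      exact h2.symm
    have hψcoeff : ∀ k : ℤ, fourierCoeff ψ k = fourierCoeff (star ψ) k := by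
      intro k
      rw [fourierCoeff_star]
      have hm : (min k 0 - 1 : ℤ) < 0 := by omega
      have hn : (min k 0 - 1 - k : ℤ) < 0 := by omega
      have hk := key (min k 0 - 1) (min k 0 - 1 - k)
      rw [entry_mm hR hm hn, entry_mm hR hn hm] at hk
      have h2 : starRingEnd ℂ (fourierCoeff ψ (-k)) = fourierCoeff ψ k := by
        simpa [show (min k 0 - 1 - k) - (min k 0 - 1) = -k by ring,
          show (min k 0 - 1) - (min k 0 - 1 - k) = k by ring] using hk
      exact h2.symm
    have hfae := ae_eq_of_fourierCoeff_eq hf (memLp_star hf) hfcoeff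
    have hψae := ae_eq_of_fourierCoeff_eq hψ (memLp_star hψ) hψcoeff
    have hfim : ∀ᵐ t ∂μ, (f t).im = 0 := by
      filter_upwards [hfae] with t ht
      have h1 : starRingEnd ℂ (f t) = f t := by
        simpa [Pi.star_apply, Complex.star_def] using ht.symm
      exact Complex.conj_eq_iff_im.mp h1
    have hψim : ∀ᵐ t ∂μ, (ψ t).im = 0 := by
      filter_upwards [hψae] with t ht
      have h1 : starRingEnd ℂ (ψ t) = ψ t := by
        simpa [Pi.star_apply, Complex.star_def] using ht.symm
      exact Complex.conj_eq_iff_im.mp h1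
    have hgφ : ∀ k : ℤ, k < 0 → fourierCoeff g k = starRingEnd ℂ (fourierCoeff φ (-k)) := by
      intro k hk
      have hkey := key 0 k
      rw [entry_pm hR le_rfl hk, entry_mp hR hk le_rfl] at hkey
      have h2 := congrArg (starRingEnd ℂ) hkey
      simpa using h2
    have hc : MemLp (g - star φ) 2 μ := hg.sub hφs
    refine ⟨hfim, hψim, hc, ?_⟩
    rw [mem_H2_iff]
    intro n hn
    rw [show hc.toLp (g - star φ) = hg.toLp g - hφs.toLp (star φ) from
        MemLp.toLp_sub hg hφs,
      inner_sub_right, inner_EF_toLp, inner_EF_toLp, fourierCoeff_star, hgφ n hn, sub_self]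
  · rintro ⟨hfim, hψim, hc, hcH2⟩
    have hfs : f =ᵐ[μ] star f := by
      filter_upwards [hfim] with t ht
      simpa [Pi.star_apply, Complex.star_def] using (Complex.conj_eq_iff_im.mpr ht).symm
    have hψs : ψ =ᵐ[μ] star ψ := by
      filter_upwards [hψim] with t ht
      simpa [Pi.star_apply, Complex.star_def] using (Complex.conj_eq_iff_im.mpr ht).symm
    have hfc : ∀ k : ℤ, fourierCoeff f k = starRingEnd ℂ (fourierCoeff f (-k)) := by
      intro k
      rw [← fourierCoeff_star]
      exact fourierCoeff_congr_ae hfs k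
    have hψc : ∀ k : ℤ, fourierCoeff ψ k = starRingEnd ℂ (fourierCoeff ψ (-k)) := by
      intro k
      rw [← fourierCoeff_star]
      exact fourierCoeff_congr_ae hψs k
    have hgc : ∀ k : ℤ, k < 0 → fourierCoeff g k = starRingEnd ℂ (fourierCoeff φ (-k)) := by
      intro k hk
      have h0 := mem_H2_iff.mp hcH2 k hk
      rw [show hc.toLp (g - star φ) = hg.toLp g - hφs.toLp (star φ) from
          MemLp.toLp_sub hg hφs,
        inner_sub_right, inner_EF_toLp, inner_EF_toLp, fourierCoeff_star, sub_eq_zero] at h0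
      exact h0
    have hent : ∀ m n : ℤ, ⟪R (EF m), EF n⟫ = ⟪EF m, R (EF n)⟫ := by
      intro m n
      rw [← inner_conj_symm (EF m) (R (EF n))]
      rcases le_or_gt 0 m with hm | hm <;> rcases le_or_gt 0 n with hn | hn
      · rw [entry_pp hR hm hn, entry_pp hR hn hm]
        rw [hfc (m - n), show -(m - n) = n - m by ring, Complex.conj_conj]
      · rw [entry_pm hR hm hn, entry_mp hR hn hm]
        rw [hgc (n - m) (by omega), show -(n - m) = m - n by ring, Complex.conj_conj]
      · rw [entry_mp hR hm hn, entry_pm hR hn hm]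
        rw [hgc (m - n) (by omega), show -(m - n) = n - m by ring, Complex.conj_conj]
      · rw [entry_mm hR hm hn, entry_mm hR hn hm]
        rw [hψc (m - n), show -(m - n) = n - m by ring, Complex.conj_conj]
    rw [ContinuousLinearMap.isSelfAdjoint_iff_isSymmetric]
    intro x y
    simpa using symmetric_of_entries hent x y

end GSIO
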